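/- Fix α, ρ ∈ (−∞,1) \ {0}, real numbers a, b, k, and suppose K := (kα − 1)ρ/(α(ρ − 1)) + a + b²(α(ρ−1) − ρ)/(2ρ) > 0. Define g : (0,∞) → ℝ by g(λ) := (1/α)·(Kλ)^{α(ρ−1)/ρ}. Then g is twice differentiable on (0,∞) and for every λ > 0: α·g(λ)·[ (α g(λ))^{ρ/((ρ−1)α)}·(1/ρ − 1) + λ(k − 1/α) ] + a λ²·g'(λ) + (1/2) b² λ³·g''(λ) = 0. -/

import Mathlib

/-- Verification of the analytic solution of the stationary HJB equation for the
stylised mortality model `dλ = aλ² dt + bλ^{3/2} dW` with `μ = r = δ = 0`: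
`g(λ) = (1/α)(Kλ)^{α(ρ−1)/ρ}` with
`K = (kα − 1)ρ/(α(ρ − 1)) + a + b²(α(ρ−1) − ρ)/(2ρ) > 0` is twice differentiable
on `(0,∞)` and solves
`αg[(αg)^{ρ/((ρ−1)α)}(1/ρ − 1) + λ(k − 1/α)] + aλ²g' + (1/2)b²λ³g'' = 0`. -/
theorem stylised_hjb_solution (α ρ a b k : ℝ)
    (hα1 : α < 1) (hα0 : α ≠ 0) (hρ1 : ρ < 1) (hρ0 : ρ ≠ 0)
    (hK : 0 < (k * α - 1) * ρ / (α * (ρ - 1)) + a + b^2 * (α * (ρ - 1) - ρ) / (2 * ρ)) :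
    ∀ K : ℝ, K = (k * α - 1) * ρ / (α * (ρ - 1)) + a + b^2 * (α * (ρ - 1) - ρ) / (2 * ρ) →
    ∀ g : ℝ → ℝ, (g = fun l => (1/α) * (K * l) ^ (α * (ρ - 1) / ρ)) →
      (∀ l : ℝ, 0 < l → DifferentiableAt ℝ g l ∧ DifferentiableAt ℝ (deriv g) l) ∧
      (∀ l : ℝ, 0 < l →
        α * g l * ((α * g l) ^ (ρ / ((ρ - 1) * α)) * (1/ρ - 1) + l * (k - 1/α))
          + a * l^2 * deriv g l + (1/2) * b^2 * l^3 * deriv (deriv g) l = 0) := by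
  intro K hKdef g hg
  have hKpos : 0 < K := hKdef ▸ hK
  have hρ1' : ρ - 1 ≠ 0 := sub_ne_zero.mpr (ne_of_lt hρ1)
  obtain ⟨p, hp⟩ : ∃ p : ℝ, p = α * (ρ - 1) / ρ := ⟨_, rfl⟩
  have hpne : p ≠ 0 := by rw [hp]; exact div_ne_zero (mul_ne_zero hα0 hρ1') hρ0
  obtain ⟨c, hc⟩ : ∃ c : ℝ, c = K ^ p / α := ⟨_, rfl⟩
  have hKp : K ^ p = c * α := by rw [hc]; field_simp
  have hgl : ∀ l : ℝ, 0 < l → g l = c * l ^ p := by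
    intro l hl
    rw [hg]
    simp only [← hp, Real.mul_rpow hKpos.le hl.le, hc]
    ring
  have hderiv1 : ∀ l : ℝ, 0 < l → HasDerivAt g (c * p * l ^ (p - 1)) l := by
    intro l hl
    have h1 : HasDerivAt (fun x : ℝ => c * x ^ p) (c * (p * l ^ (p - 1))) l :=
      (Real.hasDerivAt_rpow_const (Or.inl hl.ne')).const_mul c
    have heq : g =ᶠ[nhds l] fun x => c * x ^ p :=
      Filter.eventually_of_mem (Ioi_mem_nhds hl) (fun x hx => hgl x hx)
    have h2 := h1.congr_of_eventuallyEq heq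
    convert h2 using 1
    · rfl
    · rfl
    ring
  have hderivg : ∀ l : ℝ, 0 < l → deriv g l = c * p * l ^ (p - 1) :=
    fun l hl => (hderiv1 l hl).deriv
  have hderiv2 : ∀ l : ℝ, 0 < l →
      HasDerivAt (deriv g) (c * p * (p - 1) * l ^ (p - 2)) l := by
    intro l hl
    have h1 : HasDerivAt (fun x : ℝ => c * p * x ^ (p - 1))
        (c * p * ((p - 1) * l ^ (p - 1 - 1))) l :=
      (Real.hasDerivAt_rpow_const (Or.inl hl.ne')).const_mul (c * p)
    have heq : deriv g =ᶠ[nhds l] fun x => c * p * x ^ (p - 1) :=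
      Filter.eventually_of_mem (Ioi_mem_nhds hl) (fun x hx => hderivg x hx)
    have h2 := h1.congr_of_eventuallyEq heq
    rw [show p - 1 - 1 = p - 2 by ring] at h2
    convert h2 using 1
    · rfl
    · rfl
    ring
  refine ⟨fun l hl => ⟨(hderiv1 l hl).differentiableAt, (hderiv2 l hl).differentiableAt⟩, ?_⟩
  intro l hl
  rw [hderivg l hl, (hderiv2 l hl).deriv, hgl l hl]
  have hαc : α * (c * l ^ p) = (K * l) ^ p := by
    rw [Real.mul_rpow hKpos.le hl.le, hKp]
    ring
  rw [hαc]
  have hexp : ρ / ((ρ - 1) * α) = 1 / p := by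
    rw [hp, one_div_div, mul_comm (ρ - 1) α]
  rw [hexp]
  have hKl : ((K * l) ^ p) ^ (1 / p) = K * l := by
    rw [← Real.rpow_mul (by positivity : (0:ℝ) ≤ K * l), mul_one_div,
      div_self hpne, Real.rpow_one]
  rw [hKl, ← hαc]
  have hY1 : l ^ (p - 1) = l ^ (p - 2) * l := by
    rw [show p - 1 = (p - 2) + 1 by ring, Real.rpow_add hl, Real.rpow_one]
  have h2r : l ^ (2:ℝ) = l ^ 2 := by
    rw [show (2:ℝ) = ((2:ℕ):ℝ) by norm_num, Real.rpow_natCast]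
  have hY2 : l ^ p = l ^ (p - 2) * l ^ 2 := by
    have h := Real.rpow_add hl (p - 2) 2
    rw [h2r, show p - 2 + 2 = p by ring] at h
    exact h
  rw [hY1, hY2]
  have hKeq2 : 2 * α * K * (1 - ρ) + 2 * ρ * (α * k - 1) + 2 * ρ * a * p
      + ρ * b ^ 2 * p * (p - 1) = 0 := by
    rw [hKdef, hp]
    field_simp
    ring
  field_simp
  linear_combination (c * l ^ (p - 2) * l ^ 3) * hKeq2
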